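/- Let 0 ≤ k ≤ n−1. The map μ sending a pair (α₀, ρ) = ({α₁ < ⋯ < α_{n−k−1}}, ρ₁⋯ρ_{k+1}) — where ρ is a word of k+1 distinct elements of [n] and α₀ is the complementary set — to the word α₁ α₂ ⋯ α_{n−k−m−1} α_{n−k−1} α_{n−k−2} ⋯ α_{n−k−m} ρ₁ ⋯ ρ_{k+1}, where m = #{a ∈ α₀ : a > ρ₁}, is a bijection from the set of such pairs onto {σ ∈ S_n : the special reverse wave srw(σ) has length ≥ n−k}, it satisfies des((α₀,ρ)) = des(μ((α₀,ρ))), and its inverse is the map ν sending σ = σ₁⋯σ_n to ({σ₁,…,σ_{n−k−1}}, σ_{n−k}⋯σ_n). -/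

import Mathlib

namespace Paper

/-- number of descents of a word -/
def des : List ℕ → ℕ
  | a :: b :: t => (if b < a then 1 else 0) + des (b :: t)
  | _ => 0

/-- number of inversions of a word -/
def inv : List ℕ → ℕ
  | [] => 0
  | a :: t => (t.countP fun x => decide (x < a)) + inv t

/-- a word is (strictly) increasing -/
def Incr (w : List ℕ) : Prop := w.Chain' (· < ·)

/-- a word is a hook: `a₁ > a₂` and `a₂ < a₃ < ⋯ < a_s`, length ≥ 2 -/
def IsHook : List ℕ → Prop
  | a :: b :: t => b < a ∧ (b :: t).Chain' (· < ·)
  | _ => False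

/-- `(γ, hs)` is the hook factorization data of `w` -/
def IsHookFact (w γ : List ℕ) (hs : List (List ℕ)) : Prop :=
  Incr γ ∧ (∀ h ∈ hs, IsHook h) ∧ w = γ ++ hs.flatten

/-- the statistic `lec` computed from the hooks of a factorization -/
def lecVal (hs : List (List ℕ)) : ℕ := (hs.map inv).sum

/-- one-line word of `σ ∈ S_n`, with entries in `[1..n]` -/
def word {n : ℕ} (σ : Equiv.Perm (Fin n)) : List ℕ :=
  List.ofFn fun i => (σ i : ℕ) + 1

/-- a word `w₁ ⋯ w_ℓ` with maximum in position `c` is a (nontrivial) reverse wave if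
`c ≠ ℓ` and `w₁ < ⋯ < w_{c-1} < w_ℓ < w_{ℓ-1} < ⋯ < w_c`. -/
def IsRevWave (w : List ℕ) : Prop :=
  ∃ c, c + 1 < w.length ∧ (w.take c ++ (w.drop c).reverse).Chain' (· < ·)

/-- a word `w₁ ⋯ w_ℓ` with maximum in position `c` is a (nontrivial) wave if
`c ≠ ℓ` and `w_ℓ < w_{ℓ-1} < ⋯ < w_{c+1} < w₁ < ⋯ < w_c`. -/
def IsWave (w : List ℕ) : Prop :=
  ∃ c, c + 1 < w.length ∧ ((w.drop (c + 1)).reverse ++ w.take (c + 1)).Chain' (· < ·)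

/-- the maximal strictly decreasing run starting below `hi` and staying above `lo` -/
def decRun (hi lo : ℕ) : List ℕ → List ℕ
  | [] => []
  | b :: t => if b < hi ∧ lo < b then b :: decRun b lo t else []

def srwAux (lo : ℕ) : List ℕ → List ℕ
  | [] => []
  | [a] => [a]
  | a :: b :: t => if a < b then a :: srwAux a (b :: t) else a :: decRun a lo (b :: t)

/-- the special reverse wave of a word: the prefix `w₁ ⋯ w_s` where `t` is the position of the
first descent (the whole word if none) and `s ≥ t` is maximal with
`w_t > w_{t+1} > ⋯ > w_s > w_{t-1}` (convention `w₀ = 0`). -/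
def srw (w : List ℕ) : List ℕ := srwAux 0 w

/-- the number of special reverse descents: `des (srw w) + χ(w_s > w_{s+1})` -/
def srdes (w : List ℕ) : ℕ :=
  des (srw w) +
    match (srw w).getLast?, (w.drop (srw w).length).head? with
    | some x, some y => if y < x then 1 else 0
    | _, _ => 0

/-- the prefix `w₁ ⋯ w_t` of `w` ending at the position `t` of the first descent
(the whole word if there is no descent) -/
def incrPrefix : List ℕ → List ℕ
  | [] => []
  | [a] => [a]
  | a :: b :: t => if a < b then a :: incrPrefix (b :: t) else [a]

/-- the special wave `w_r ⋯ w_t ⋯ w_s` of a word -/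
def sw (w : List ℕ) : List ℕ :=
  let pre := incrPrefix w
  match w.drop pre.length with
  | [] => w
  | x :: rs =>
    let kept := pre.takeWhile fun u => decide (u < x)
    pre.drop kept.length ++ x :: decRun x (kept.getLastD 0) rs

/-- the word `w \ sw(w) = w₁ ⋯ w_{r-1} w_{s+1} ⋯ w_ℓ` obtained removing the special wave -/
def swCompl (w : List ℕ) : List ℕ :=
  let pre := incrPrefix w
  match w.drop pre.length with
  | [] => []
  | x :: rs =>
    let kept := pre.takeWhile fun u => decide (u < x)
    kept ++ rs.drop (decRun x (kept.getLastD 0) rs).length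

/-- insertion `ins(a,b) = a₁ ⋯ a_x b₁ ⋯ b_q a_{x+1} ⋯ a_p`, where `x` is maximal with
`a₁ < a₂ < ⋯ < a_x < b_q` -/
def ins (a b : List ℕ) : List ℕ :=
  let pfx := (incrPrefix a).takeWhile fun u => decide (u < b.getLastD 0)
  pfx ++ b ++ a.drop pfx.length

/-- the word `ρ = ρ₁ ⋯ ρ_m` (entries in `[1..n]`) associated to an injection `Fin m ↪ Fin n` -/
def rho {n m : ℕ} (f : Fin m ↪ Fin n) : List ℕ :=
  List.ofFn fun j => (f j : ℕ) + 1

/-- descent number of the pair `(α₀, ρ)`: `des ρ + #{a ∈ α₀ : a > ρ₁}`,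
where `α₀ = [n] \ {ρ₁, …, ρ_m}` -/
def desPair (n : ℕ) {m : ℕ} (f : Fin m ↪ Fin n) : ℕ :=
  des (rho f) + ((Finset.Icc 1 n).filter fun a => a ∉ rho f ∧ (rho f).headI < a).card

/-- descent number of the pair `(α₀, ρ)`, with `ρ` given as a list -/
def desPairL (n : ℕ) (ρ : List ℕ) : ℕ :=
  des ρ + ((Finset.Icc 1 n).filter fun a => a ∉ ρ ∧ ρ.headI < a).card

/-- the map `μ`, sending `ρ` (with complementary set `α₀ = {α₁ < ⋯ < α_{n-k-1}}`) to
`α₁ ⋯ α_{n-k-m-1} α_{n-k-1} α_{n-k-2} ⋯ α_{n-k-m} ρ₁ ⋯ ρ_{k+1}`,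
where `m = #{a ∈ α₀ : a > ρ₁}` -/
def mu (n : ℕ) (ρ : List ℕ) : List ℕ :=
  let A := ((Finset.Icc 1 n).filter fun a => a ∉ ρ).sort (· ≤ ·)
  let m := (A.filter fun a => decide (ρ.headI < a)).length
  (A.take (A.length - m) ++ (A.drop (A.length - m)).reverse) ++ ρ

theorem des_append (x : List ℕ) (a : ℕ) (t : List ℕ) :
    des (x ++ a :: t) = des x + (if a < x.getLastD 0 then 1 else 0) + des (a :: t) := by
  induction x with
  | nil => simp [des]
  | cons c x' ih =>
    cases x' with
    | nil => simp [des]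
    | cons e x'' =>
      have h1 : des (c :: e :: x'') = (if e < c then 1 else 0) + des (e :: x'') := rfl
      have h2 : des (c :: e :: (x'' ++ a :: t)) =
          (if e < c then 1 else 0) + des (e :: (x'' ++ a :: t)) := rfl
      simp only [List.cons_append] at ih ⊢
      rw [h1, h2, ih]
      simp only [List.getLastD_cons]
      omega

theorem des_of_chain_lt {l : List ℕ} (h : l.Chain' (· < ·)) : des l = 0 := by
  induction l with
  | nil => rfl
  | cons a t ih =>
    cases t with
    | nil => rfl
    | cons b t' =>
      rw [List.Chain', List.isChain_cons_cons] at h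
      have : des (a :: b :: t') = (if b < a then 1 else 0) + des (b :: t') := rfl
      rw [this, ih h.2, if_neg (by omega)]

theorem des_of_chain_gt {l : List ℕ} (h : l.Chain' (· > ·)) : des l + 1 = l.length + (if l = [] then 1 else 0) := by
  induction l with
  | nil => rfl
  | cons a t ih =>
    cases t with
    | nil => rfl
    | cons b t' =>
      rw [List.Chain', List.isChain_cons_cons] at h
      have : des (a :: b :: t') = (if b < a then 1 else 0) + des (b :: t') := rfl
      rw [this, if_pos h.1]
      have := ih h.2
      simp at this ⊢
      omega

theorem decRun_prefix (hi lo : ℕ) (r : List ℕ) : decRun hi lo r <+: r := by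
  induction r generalizing hi with
  | nil => simp [decRun]
  | cons b t ih =>
    rw [decRun]
    split
    · exact List.cons_prefix_cons.mpr ⟨rfl, ih b⟩
    · exact (b :: t).nil_prefix

theorem decRun_chain (hi lo : ℕ) (r : List ℕ) :
    (hi :: decRun hi lo r).Chain' (· > ·) ∧ ∀ x ∈ decRun hi lo r, lo < x := by
  induction r generalizing hi with
  | nil => simp [decRun, List.Chain']
  | cons b t ih =>
    rw [decRun]
    split_ifs with h
    · have := ih b
      refine ⟨List.isChain_cons_cons.2 ⟨h.1, this.1⟩, ?_⟩
      intro x hx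
      rcases List.mem_cons.1 hx with hx | hx
      · exact hx ▸ h.2
      · exact this.2 x hx
    · simp [List.Chain']

theorem decRun_append (v r : List ℕ) (hi lo : ℕ) (hv : v.Chain' (· > ·))
    (hlo : ∀ x ∈ v, lo < x) (hhi : ∀ h : v ≠ [], v.headI < hi) :
    decRun hi lo (v ++ r) = v ++ decRun (v.getLastD hi) lo r := by
  induction v generalizing hi with
  | nil => simp
  | cons a t ih =>
    rw [List.cons_append, decRun, if_pos ⟨hhi (by simp), hlo a (by simp)⟩]
    rw [List.Chain', List.isChain_cons] at hv
    rw [ih a hv.2 (fun x hx => hlo x (List.mem_cons_of_mem a hx))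
      (fun h => by
        cases t with
        | nil => exact absurd rfl h
        | cons c t' => exact hv.1 c rfl)]
    cases t <;> simp [List.getLastD]

theorem srwAux_incr_append (u : List ℕ) (lo : ℕ) (w : List ℕ) (hu : u.Chain' (· < ·))
    (hw : ∀ _ : w ≠ [], ∀ x ∈ u, x < w.headI) :
    srwAux lo (u ++ w) = u ++ srwAux (u.getLastD lo) w := by
  induction u generalizing lo with
  | nil => simp
  | cons a t ih =>
    rw [List.Chain', List.isChain_cons] at hu
    cases t with
    | nil =>
      cases w with
      | nil => simp [srwAux]
      | cons b w' =>
        have hab : a < b := hw (by simp) a (by simp)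
        simp only [List.singleton_append, List.getLastD]
        rw [srwAux, if_pos hab]
        rfl
    | cons c t' =>
      have hac : a < c := hu.1 c rfl
      have : srwAux lo (a :: c :: (t' ++ w)) = a :: srwAux a (c :: t' ++ w) := by
        rw [srwAux, if_pos hac]; rfl
      have ih' := ih a hu.2 (fun h x hx => hw h x (List.mem_cons_of_mem a hx))
      simp only [List.cons_append] at this ih' ⊢
      rw [this, ih']
      simp [List.getLastD]

theorem srwAux_ne_nil (lo : ℕ) (w : List ℕ) (h : w ≠ []) : srwAux lo w ≠ [] := by
  cases w with
  | nil => exact absurd rfl h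
  | cons a t =>
    cases t with
    | nil => simp [srwAux]
    | cons b t' =>
      rw [srwAux]
      split <;> simp


theorem srwAux_shape (w : List ℕ) (lo : ℕ) (hlo : ∀ _ : w ≠ [], lo < w.headI) :
    ∃ u v, srwAux lo w = u ++ v ∧ (u ++ v) <+: w ∧ u.Chain' (· < ·) ∧ v.Chain' (· > ·) ∧
      ∀ x ∈ v, u.getLastD lo < x := by
  induction w generalizing lo with
  | nil => exact ⟨[], [], by simp [srwAux, List.Chain']⟩
  | cons a t ih =>
    cases t with
    | nil =>
      exact ⟨[a], [], by simp [srwAux], by simp, by simp [List.Chain'], by simp [List.Chain'], by simp⟩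
    | cons b t' =>
      by_cases hab : a < b
      · obtain ⟨u', v', heq, hpre, hcu, hcv, hgt⟩ := ih a (fun _ => hab)
        cases u' with
        | nil =>
          refine ⟨[a], v', ?_, ?_, by simp [List.Chain'], hcv, ?_⟩
          · rw [srwAux, if_pos hab, heq]; rfl
          · simp only [List.nil_append] at hpre
            exact List.cons_prefix_cons.mpr ⟨rfl, hpre⟩
          · simpa using hgt
        | cons c u'' =>
          have hpre' : c :: (u'' ++ v') <+: b :: t' := by simpa using hpre
          have hcb : c = b := (List.cons_prefix_cons.mp hpre').1
          have hac : a < c := by rw [hcb]; exact hab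
          refine ⟨a :: c :: u'', v', ?_, ?_, ?_, hcv, ?_⟩
          · rw [srwAux, if_pos hab, heq]; rfl
          · show a :: (c :: (u'' ++ v')) <+: a :: b :: t'
            exact List.cons_prefix_cons.mpr ⟨rfl, hpre'⟩
          · exact List.isChain_cons_cons.mpr ⟨hac, hcu⟩
          · simpa only [List.getLastD_cons] using hgt
      · refine ⟨[], a :: decRun a lo (b :: t'), ?_, ?_, by simp [List.Chain'], (decRun_chain a lo (b :: t')).1, ?_⟩
        · rw [srwAux, if_neg hab]; rfl
        · show [] ++ a :: decRun a lo (b :: t') <+: a :: b :: t'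
          rw [List.nil_append]
          exact List.cons_prefix_cons.mpr ⟨rfl, decRun_prefix a lo (b :: t')⟩
        · intro x hx
          rcases List.mem_cons.1 hx with hx | hx
          · exact hx ▸ hlo (by simp)
          · exact (decRun_chain a lo (b :: t')).2 x hx

theorem filter_split (A : List ℕ) (hA : A.Pairwise (· < ·)) (c : ℕ) :
    ∃ u v, A = u ++ v ∧ (∀ x ∈ u, x ≤ c) ∧ (∀ x ∈ v, c < x) ∧
      A.filter (fun a => decide (c < a)) = v := by
  induction A with
  | nil => exact ⟨[], [], by simp⟩
  | cons a t ih =>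
    rw [List.pairwise_cons] at hA
    by_cases hca : c < a
    · refine ⟨[], a :: t, by simp, by simp, ?_, ?_⟩
      · intro x hx
        rcases List.mem_cons.1 hx with hx | hx
        · omega
        · exact lt_trans hca (hA.1 x hx)
      · rw [List.filter_eq_self]
        intro x hx
        rcases List.mem_cons.1 hx with hx | hx
        · simp [hx, hca]
        · simp [lt_trans hca (hA.1 x hx)]
    · obtain ⟨u, v, he, hu, hv, hf⟩ := ih hA.2
      refine ⟨a :: u, v, by rw [he]; rfl, ?_, hv, ?_⟩
      · intro x hx
        rcases List.mem_cons.1 hx with hx | hx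
        · omega
        · exact hu x hx
      · rw [List.filter_cons, if_neg (by simpa using hca)]
        exact hf

theorem sort_eq_of (s : Finset ℕ) (l : List ℕ) (hs : l.Pairwise (· < ·))
    (hm : ∀ x, x ∈ l ↔ x ∈ s) : s.sort (· ≤ ·) = l := by
  have hnd : l.Nodup := hs.imp Nat.ne_of_lt
  have hperm : l.Perm (s.sort (· ≤ ·)) := by
    apply List.perm_of_nodup_nodup_toFinset_eq hnd (s.sort_nodup (· ≤ ·))
    ext x
    simp [List.mem_toFinset, Finset.mem_sort, hm]
  exact List.Perm.eq_of_pairwise' (s.pairwise_sort (· ≤ ·)) (hs.imp le_of_lt) (hperm.symm)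

theorem getLastD_append (l1 l2 : List ℕ) (d : ℕ) :
    (l1 ++ l2).getLastD d = l2.getLastD (l1.getLastD d) := by
  induction l1 generalizing d with
  | nil => simp
  | cons a t ih =>
    rw [List.cons_append]
    cases t with
    | nil =>
      cases l2 <;> simp [List.getLastD]
    | cons c t' =>
      have := ih (d := a)
      simp only [List.getLastD_cons] at *
      rw [this]

theorem mem_le_getLastD : ∀ (u : List ℕ), u.Pairwise (· < ·) → ∀ (d : ℕ), ∀ x ∈ u, x ≤ u.getLastD d := by
  intro u
  induction u with
  | nil => simp
  | cons a t ih =>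
    intro hu d x hx
    rw [List.pairwise_cons] at hu
    cases t with
    | nil =>
      simp at hx
      simp [hx, List.getLastD]
    | cons c t' =>
      rw [List.getLastD_cons]
      rcases List.mem_cons.1 hx with hx | hx
      · subst hx
        have h1 : x < c := hu.1 c (by simp)
        have h2 : c ≤ (c :: t').getLastD d := ih hu.2 d c (by simp)
        exact le_of_lt (lt_of_lt_of_le h1 h2)
      · exact ih hu.2 d x hx

theorem getLastD_mem (u : List ℕ) (h : u ≠ []) (d : ℕ) : u.getLastD d ∈ u := by
  induction u with
  | nil => exact absurd rfl h
  | cons a t ih =>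
    cases t with
    | nil => simp [List.getLastD]
    | cons c t' =>
      rw [List.getLastD_cons]
      exact List.mem_cons_of_mem a (ih (by simp))

theorem srwAux_desc (lo a : ℕ) (w : List ℕ) (hw : w ≠ []) (h : ¬ a < w.headI) :
    srwAux lo (a :: w) = a :: decRun a lo w := by
  cases w with
  | nil => exact absurd rfl hw
  | cons b t => rw [srwAux, if_neg (by simpa using h)]

theorem part1 (n k : ℕ) (hkn : k + 1 ≤ n) (ρ : List ℕ) (hlen : ρ.length = k + 1)
    (hnd : ρ.Nodup) (hmem : ∀ x ∈ ρ, x ∈ Finset.Icc 1 n) :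
    (mu n ρ).Perm (List.range' 1 n) ∧
      n - k ≤ (srw (mu n ρ)).length ∧
      desPairL n ρ = des (mu n ρ) ∧
      (mu n ρ).drop (n - k - 1) = ρ ∧
      ((mu n ρ).take (n - k - 1)).toFinset = (Finset.Icc 1 n).filter (fun a => a ∉ ρ) := by
  obtain ⟨r, ρ', rfl⟩ : ∃ r ρ', ρ = r :: ρ' := by
    cases ρ with
    | nil => simp at hlen
    | cons r ρ' => exact ⟨r, ρ', rfl⟩
  set ρ := r :: ρ' with hρdef
  set s : Finset ℕ := (Finset.Icc 1 n).filter (fun a => a ∉ ρ) with hs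
  set A : List ℕ := s.sort (· ≤ ·) with hA0
  set m : ℕ := (A.filter fun a => decide (ρ.headI < a)).length with hm0
  have hmu0 : mu n ρ = (A.take (A.length - m) ++ (A.drop (A.length - m)).reverse) ++ ρ := rfl
  have hAp : A.Pairwise (· < ·) := (Finset.sortedLT_sort s).pairwise
  have hAm : ∀ x, x ∈ A ↔ (x ∈ Finset.Icc 1 n ∧ x ∉ ρ) := by
    intro x; rw [hA0, Finset.mem_sort, hs, Finset.mem_filter]
  obtain ⟨u, v, hA, hu, hv, hf⟩ := filter_split A hAp r
  have hm : m = v.length := by rw [hm0, show ρ.headI = r from rfl, hf]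
  have hlenA : A.length = u.length + v.length := by rw [hA, List.length_append]
  have htake : A.take (A.length - m) = u := by
    rw [hA]; exact List.take_left' (by rw [List.length_append]; omega)
  have hdrop : A.drop (A.length - m) = v := by
    rw [hA]; exact List.drop_left' (by rw [List.length_append]; omega)
  have hmu : mu n ρ = (u ++ v.reverse) ++ ρ := by rw [hmu0, htake, hdrop]
  have hrρ : r ∈ ρ := by simp [hρdef]
  have hu' : ∀ x ∈ u, x < r := by
    intro x hx
    have hxA : x ∈ A := by rw [hA]; exact List.mem_append_left v hx
    have : x ∉ ρ := ((hAm x).1 hxA).2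
    have : x ≠ r := fun h => this (h ▸ hrρ)
    have := hu x hx
    omega
  have hr1 : 1 ≤ r := (Finset.mem_Icc.1 (hmem r hrρ)).1
  have hA1 : ∀ x ∈ A, 1 ≤ x := fun x hx => (Finset.mem_Icc.1 ((hAm x).1 hx).1).1
  have hpuv := List.pairwise_append.1 (hA ▸ hAp)
  have hcu : u.Chain' (· < ·) := List.isChain_iff_pairwise.2 hpuv.1
  have hpv : v.Pairwise (· < ·) := hpuv.2.1
  have hAcard : A.length = n - (k + 1) := by
    have hsub : ρ.toFinset ⊆ Finset.Icc 1 n := by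
      intro x hx; exact hmem x (List.mem_toFinset.1 hx)
    have hseq : s = Finset.Icc 1 n \ ρ.toFinset := by
      ext x; simp [hs, Finset.mem_sdiff, Finset.mem_filter, List.mem_toFinset]
    have : A.length = s.card := Finset.length_sort _
    rw [this, hseq, Finset.card_sdiff_of_subset hsub, Nat.card_Icc,
      List.toFinset_card_of_nodup hnd, hlen]
    omega
  -- cardinality for desPairL
  have hcard : ((Finset.Icc 1 n).filter fun a => a ∉ ρ ∧ ρ.headI < a).card = v.length := by
    have h1 : ((Finset.Icc 1 n).filter fun a => a ∉ ρ ∧ ρ.headI < a)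
        = s.filter (fun a => r < a) := by
      rw [hs, Finset.filter_filter]
      rfl
    have h2 : (s.filter (fun a => r < a)).sort (· ≤ ·) = v := by
      apply sort_eq_of
      · exact hpv
      · intro x
        constructor
        · intro hx
          rw [Finset.mem_filter]
          refine ⟨(Finset.mem_sort (α := ℕ) (· ≤ ·)).1 ?_, hv x hx⟩
          rw [← hA0, hA]
          exact List.mem_append_right u hx
        · intro hx
          rw [Finset.mem_filter] at hx
          have hxA : x ∈ A := by rw [hA0]; exact (Finset.mem_sort (α := ℕ) (· ≤ ·)).2 hx.1
          rw [hA, List.mem_append] at hxA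
          rcases hxA with h | h
          · exact absurd hx.2 (by have := hu x h; omega)
          · exact h
    rw [h1, ← Finset.length_sort (· ≤ ·), h2]
  have hperm : (mu n ρ).Perm (List.range' 1 n) := by
    rw [hmu]
    have h1 : (u ++ v.reverse).Perm A := by
      rw [hA]; exact List.Perm.append_left u (List.reverse_perm v)
    refine (h1.append_right ρ).trans ?_
    apply List.perm_of_nodup_nodup_toFinset_eq
    · rw [List.nodup_append]
      refine ⟨Finset.sort_nodup _ _, hnd, ?_⟩
      intro x hx b hb hxb
      exact ((hAm x).1 hx).2 (hxb ▸ hb)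
    · exact List.nodup_range' (s := 1) (n := n)
    · ext x
      simp only [List.toFinset_append, Finset.mem_union, List.mem_toFinset, hAm x,
        List.mem_range'_1, Finset.mem_Icc]
      constructor
      · rintro (⟨h1, _⟩ | h1)
        · omega
        · have := Finset.mem_Icc.1 (hmem x h1); omega
      · intro h
        by_cases hx : x ∈ ρ
        · exact Or.inr hx
        · exact Or.inl ⟨⟨by omega, by omega⟩, hx⟩
  have hplen : (u ++ v.reverse).length = n - k - 1 := by
    rw [List.length_append, List.length_reverse]; omega
  have hdropmu : (mu n ρ).drop (n - k - 1) = ρ := by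
    rw [hmu]; exact List.drop_left' hplen
  have htakemu : ((mu n ρ).take (n - k - 1)).toFinset = s := by
    rw [hmu, List.take_left' hplen, List.toFinset_append, List.toFinset_reverse,
      ← List.toFinset_append, ← hA, hA0, Finset.sort_toFinset]
  refine ⟨hperm, ?_, ?_, hdropmu, htakemu⟩
  · -- srw length
    cases v with
    | nil =>
      have : mu n ρ = u ++ ρ := by rw [hmu]; simp
      rw [this, srw, srwAux_incr_append u 0 ρ hcu (fun _ x hx => hu' x hx)]
      have h1 : srwAux (u.getLastD 0) ρ ≠ [] := srwAux_ne_nil _ _ (by simp [hρdef])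
      have h2 : 1 ≤ (srwAux (u.getLastD 0) ρ).length := List.length_pos_iff.2 h1
      simp only [List.length_nil] at hlenA
      rw [List.length_append]
      omega
    | cons w0 wt =>
      set v : List ℕ := w0 :: wt with hvdef
      obtain ⟨p, vq, hvr⟩ : ∃ p vq, v.reverse = p :: vq := by
        cases hvr : v.reverse with
        | nil => exact absurd (List.reverse_eq_nil_iff.1 hvr) (by simp [hvdef])
        | cons p vq => exact ⟨p, vq, rfl⟩
      have hpv' : p ∈ v := by
        have : p ∈ v.reverse := by rw [hvr]; simp
        simpa using this
      have hvqv : ∀ x ∈ vq, x ∈ v := by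
        intro x hx
        have : x ∈ v.reverse := by rw [hvr]; exact List.mem_cons_of_mem p hx
        simpa using this
      have hrp : r < p := hv p hpv'
      have hpgt : (p :: vq).Pairwise (· > ·) := by
        rw [← hvr, List.pairwise_reverse]
        exact hpv.imp (fun h => h)
      have hpmax : ∀ x ∈ vq, x < p := (List.pairwise_cons.1 hpgt).1
      have hlor : u.getLastD 0 < r := by
        cases u with
        | nil => exact (hr1 : 0 < r)
        | cons a ut => exact hu' _ (getLastD_mem (a :: ut) (by simp) 0)
      have hmu' : mu n ρ = u ++ (p :: (vq ++ ρ)) := by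
        rw [hmu, hvr]; simp
      have hxu_p : ∀ x ∈ u, x < (p :: (vq ++ ρ)).headI := by
        intro x hx
        have := hu' x hx
        simpa using lt_trans this hrp
      rw [hmu', srw, srwAux_incr_append u 0 _ hcu (fun _ => hxu_p)]
      have hne : vq ++ ρ ≠ [] := by simp [hρdef]
      have hheadlt : (vq ++ ρ).headI < p := by
        cases vq with
        | nil => simpa [hρdef] using hrp
        | cons c q => exact hpmax c (by simp)
      rw [srwAux_desc _ p _ hne (by omega)]
      have hassoc : vq ++ ρ = (vq ++ [r]) ++ ρ' := by simp [hρdef]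
      have hvqr : (vq ++ [r]).Chain' (· > ·) := by
        rw [List.Chain', List.isChain_iff_pairwise, List.pairwise_append]
        refine ⟨(List.pairwise_cons.1 hpgt).2, List.pairwise_singleton _ _, ?_⟩
        intro a ha b hb
        rw [List.mem_singleton] at hb
        subst hb
        exact hv a (hvqv a ha)
      have hvqlo : ∀ x ∈ vq ++ [r], u.getLastD 0 < x := by
        intro x hx
        rw [List.mem_append, List.mem_singleton] at hx
        rcases hx with hx | rfl
        · exact lt_trans hlor (hv x (hvqv x hx))
        · exact hlor
      have hvqhi : ∀ _ : vq ++ [r] ≠ [], (vq ++ [r]).headI < p := by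
        intro _
        cases vq with
        | nil => simpa using hrp
        | cons c q => exact hpmax c (by simp)
      rw [hassoc, decRun_append (vq ++ [r]) ρ' p (u.getLastD 0) hvqr hvqlo hvqhi]
      simp only [List.length_append, List.length_cons, List.length_reverse]
      have : v.length = vq.length + 1 := by
        have := congrArg List.length hvr
        simpa using this
      omega
  · -- des
    have hdes : desPairL n ρ = des ρ + v.length := by
      rw [desPairL, hcard]
    rw [hdes, hmu]
    cases v with
    | nil =>
      rw [show (u ++ List.reverse [] : List ℕ) = u by simp, hρdef, des_append]
      have h1 : des u = 0 := des_of_chain_lt hcu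
      have h2 : ¬ r < u.getLastD 0 := by
        cases u with
        | nil => simp
        | cons a ut =>
          have := hu' _ (getLastD_mem (a :: ut) (by simp) 0)
          omega
      rw [h1, if_neg h2]
      simp
    | cons w0 wt =>
      set v : List ℕ := w0 :: wt with hvdef
      obtain ⟨p, vq, hvr⟩ : ∃ p vq, v.reverse = p :: vq := by
        cases hvr : v.reverse with
        | nil => exact absurd (List.reverse_eq_nil_iff.1 hvr) (by simp [hvdef])
        | cons p vq => exact ⟨p, vq, rfl⟩
      have hpv' : p ∈ v := by
        have : p ∈ v.reverse := by rw [hvr]; simp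
        simpa using this
      have hrp : r < p := hv p hpv'
      have hpgt : (p :: vq).Pairwise (· > ·) := by
        rw [← hvr, List.pairwise_reverse]
        exact hpv.imp (fun h => h)
      have hlor : u.getLastD 0 < r := by
        cases u with
        | nil => exact (hr1 : 0 < r)
        | cons a ut => exact hu' _ (getLastD_mem (a :: ut) (by simp) 0)
      have hlast : (u ++ v.reverse).getLastD 0 ∈ v := by
        rw [getLastD_append, hvr]
        have := getLastD_mem (p :: vq) (by simp) (u.getLastD 0)
        have h2 : ∀ x ∈ p :: vq, x ∈ v := by
          intro x hx
          have : x ∈ v.reverse := by rw [hvr]; exact hx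
          simpa using this
        exact h2 _ this
      rw [hρdef, des_append]
      have hb : (if r < (u ++ v.reverse).getLastD 0 then 1 else 0) = 1 :=
        if_pos (hv _ hlast)
      rw [hb]
      have hduv : des (u ++ v.reverse) = vq.length := by
        rw [hvr, des_append]
        have h1 : des u = 0 := des_of_chain_lt hcu
        have h2 : ¬ p < u.getLastD 0 := by omega
        have h3 : des (p :: vq) + 1 = (p :: vq).length := by
          have := des_of_chain_gt (List.isChain_iff_pairwise.2 hpgt)
          simpa using this
        rw [h1, if_neg h2]
        simp at h3 ⊢
        omega
      have hvlen : v.length = vq.length + 1 := by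
        have := congrArg List.length hvr
        simpa using this
      rw [hduv]
      have : des ρ = des (r :: ρ') := by rw [hρdef]
      omega

theorem dropLast_append_getLastD (l : List ℕ) (h : l ≠ []) (d : ℕ) :
    l.dropLast ++ [l.getLastD d] = l := by
  cases l with
  | nil => exact absurd rfl h
  | cons a t =>
    rw [List.getLastD_cons, ← List.getLast_eq_getLastD (a := a) (l := t) (by simp)]
    exact List.dropLast_append_getLast (by simp)

theorem part2 (n k : ℕ) (hkn : k + 1 ≤ n) (σ : List ℕ)
    (hσ : σ.Perm (List.range' 1 n)) (hle : n - k ≤ (srw σ).length) :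
    mu n (σ.drop (n - k - 1)) = σ := by
  set L : ℕ := n - k - 1 with hL
  have hLk : n - k = L + 1 := by omega
  have hσlen : σ.length = n := by rw [hσ.length_eq, List.length_range']
  have hσnd : σ.Nodup := hσ.nodup_iff.2 (List.nodup_range' (s := 1) (n := n))
  have hσm : ∀ x, x ∈ σ ↔ 1 ≤ x ∧ x ≤ n := by
    intro x
    rw [hσ.mem_iff, List.mem_range'_1]
    omega
  obtain ⟨r, ρ', hρ⟩ : ∃ r ρ', σ.drop L = r :: ρ' := by
    cases hd : σ.drop L with
    | nil =>
      have := congrArg List.length hd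
      rw [List.length_drop] at this
      simp at this
      omega
    | cons r ρ' => exact ⟨r, ρ', rfl⟩
  have hmemtake : ∀ x, x ∈ σ.take L ↔ x ∈ Finset.Icc 1 n ∧ x ∉ σ.drop L := by
    have hnd2 := hσnd
    rw [← List.take_append_drop L σ, List.nodup_append] at hnd2
    intro x
    constructor
    · intro hx
      have hxσ : x ∈ σ := List.take_subset L σ hx
      exact ⟨Finset.mem_Icc.2 ((hσm x).1 hxσ), fun h => hnd2.2.2 x hx x h rfl⟩
    · rintro ⟨hx1, hx2⟩
      have hxσ : x ∈ σ := (hσm x).2 (Finset.mem_Icc.1 hx1)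
      rw [← List.take_append_drop L σ, List.mem_append] at hxσ
      rcases hxσ with h | h
      · exact h
      · exact absurd h hx2
  have hσne : σ ≠ [] := by
    intro h
    rw [h] at hσlen
    simp at hσlen
    omega
  have h0 : ∀ _ : σ ≠ [], 0 < σ.headI := by
    intro _
    cases σ with
    | nil => exact absurd rfl hσne
    | cons a t =>
      have := (hσm a).1 (by simp)
      exact this.1
  obtain ⟨u₀, v₀, heq, hpre, hcu0, hcv0, hgt0⟩ := srwAux_shape σ 0 h0
  obtain ⟨rest, hrest⟩ := hpre
  have hlen0 : L + 1 ≤ u₀.length + v₀.length := by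
    rw [srw, heq, List.length_append] at hle
    omega
  have hrest' : σ = u₀ ++ (v₀ ++ rest) := by rw [← hrest]; simp
  have key : ∃ u v, σ.take (L + 1) = u ++ v ∧ u.Chain' (· < ·) ∧ v.Chain' (· > ·) ∧
      ∀ x ∈ v, u.getLastD 0 < x := by
    by_cases hc : L + 1 ≤ u₀.length
    · refine ⟨σ.take (L + 1), [], by simp, ?_, by simp [List.Chain'], by simp⟩
      rw [hrest', List.take_append_of_le_length hc]
      exact hcu0.take _
    · refine ⟨u₀, v₀.take (L + 1 - u₀.length), ?_, hcu0, hcv0.take _, ?_⟩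
      · rw [hrest', List.take_append,
          List.take_of_length_le (by omega),
          List.take_append_of_le_length (by omega)]
      · intro x hx
        exact hgt0 x (List.take_subset _ _ hx)
  obtain ⟨u, v, hsplit, hcu, hcv, hgt⟩ := key
  have hpu : u.Pairwise (· < ·) := List.isChain_iff_pairwise.1 hcu
  have hur : u ++ v = σ.take L ++ [r] := by
    rw [← hsplit, List.take_add, hρ]
    rfl
  -- the sorted complement set
  set s : Finset ℕ := (Finset.Icc 1 n).filter (fun a => a ∉ σ.drop L) with hs
  set A : List ℕ := s.sort (· ≤ ·) with hA0
  set m : ℕ := (A.filter fun a => decide ((σ.drop L).headI < a)).length with hm0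
  have hmu0 : mu n (σ.drop L) =
      (A.take (A.length - m) ++ (A.drop (A.length - m)).reverse) ++ σ.drop L := rfl
  have hhead : (σ.drop L).headI = r := by rw [hρ]; rfl
  have hsmem : ∀ x, x ∈ s ↔ x ∈ σ.take L := by
    intro x
    rw [hs, Finset.mem_filter, hmemtake]
  rw [hL] at *
  cases v with
  | nil =>
    have hueq : u = σ.take (n - k - 1) ++ [r] := by simpa using hur
    have htl : σ.take (n - k - 1) = u.dropLast := by rw [hueq, List.dropLast_concat]
    have hulast : ∀ x ∈ σ.take (n - k - 1), x < r := by
      have := List.pairwise_append.1 (hueq ▸ hpu)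
      intro x hx
      exact this.2.2 x hx r (by simp)
    have hAeq : A = σ.take (n - k - 1) := by
      rw [hA0]
      apply sort_eq_of
      · rw [htl]
        exact hpu.sublist (List.dropLast_sublist u)
      · intro x
        rw [hsmem x]
    have hm_nil : A.filter (fun a => decide ((σ.drop (n - k - 1)).headI < a)) = [] := by
      rw [List.filter_eq_nil_iff]
      intro a ha
      rw [hAeq] at ha
      have := hulast a ha
      rw [hhead]
      simpa using by omega
    have hmz : m = 0 := by rw [hm0, hm_nil]; rfl
    rw [hmu0, hmz, Nat.sub_zero, List.take_length, List.drop_length,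
      List.reverse_nil, List.append_nil, hAeq, List.take_append_drop]
  | cons w0 wt =>
    set v : List ℕ := w0 :: wt with hvdef
    have hvne : v ≠ [] := by simp [hvdef]
    have h1 : u ++ v.dropLast = σ.take (n - k - 1) := by
      have := congrArg List.dropLast hur
      rwa [List.dropLast_append_of_ne_nil hvne, List.dropLast_concat] at this
    have h3 : (u ++ v).getLastD 0 = (σ.take (n - k - 1) ++ [r]).getLastD 0 := by rw [hur]
    rw [getLastD_append, List.getLastD_concat] at h3
    have hw : v = v.dropLast ++ [r] := by
      conv_lhs => rw [← dropLast_append_getLastD v hvne (u.getLastD 0)]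
      rw [h3]
    set w : List ℕ := v.dropLast with hwdef
    have hpv : v.Pairwise (· > ·) := List.isChain_iff_pairwise.1 hcv
    have hpw2 := List.pairwise_append.1 (hw ▸ hpv)
    have hpw : w.Pairwise (· > ·) := hpw2.1
    have hwr : ∀ x ∈ w, r < x := by
      intro x hx
      exact hpw2.2.2 x hx r (by simp)
    have hrv : r ∈ v := by rw [hw]; simp
    have hu_lt : ∀ x ∈ u, x < r :=
      fun x hx => lt_of_le_of_lt (mem_le_getLastD u hpu 0 x hx) (hgt r hrv)
    have hwv : ∀ x ∈ w, x ∈ v := by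
      intro x hx
      rw [hw]
      exact List.mem_append_left _ hx
    have hu_w : ∀ x ∈ u, ∀ y ∈ w, x < y := by
      intro x hx y hy
      exact lt_of_le_of_lt (mem_le_getLastD u hpu 0 x hx) (hgt y (hwv y hy))
    have hB : (u ++ w.reverse).Pairwise (· < ·) := by
      rw [List.pairwise_append]
      refine ⟨hpu, ?_, ?_⟩
      · rw [List.pairwise_reverse]
        exact hpw.imp (fun h => h)
      · intro a ha b hb
        exact hu_w a ha b ((List.mem_reverse).1 hb)
    have hAeq : A = u ++ w.reverse := by
      rw [hA0]
      apply sort_eq_of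
      · exact hB
      · intro x
        rw [hsmem x, ← h1]
        simp [List.mem_append]
    have hfilt : A.filter (fun a => decide ((σ.drop (n - k - 1)).headI < a)) = w.reverse := by
      rw [hAeq, List.filter_append, hhead]
      have e1 : u.filter (fun a => decide (r < a)) = [] := by
        rw [List.filter_eq_nil_iff]
        intro a ha
        have := hu_lt a ha
        simpa using by omega
      have e2 : w.reverse.filter (fun a => decide (r < a)) = w.reverse := by
        rw [List.filter_eq_self]
        intro a ha
        have := hwr a ((List.mem_reverse).1 ha)
        simpa using this
      rw [e1, e2, List.nil_append]
    have hmw : m = w.length := by rw [hm0, hfilt, List.length_reverse]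
    have hAlen : A.length - m = u.length := by
      rw [hAeq, List.length_append, List.length_reverse, hmw]
      omega
    rw [hmu0, hAlen, hAeq, List.take_left, List.drop_left, List.reverse_reverse,
      h1, List.take_append_drop]

end Paper
/-- for `0 ≤ k ≤ n - 1`, the map `μ` sending the pair `(α₀, ρ)` (with
`α₀ = {α₁ < ⋯ < α_{n-k-1}}` the complement of the entries of `ρ`) to the word
`α₁ ⋯ α_{n-k-m-1} α_{n-k-1} ⋯ α_{n-k-m} ρ₁ ⋯ ρ_{k+1}`, where `m = #{a ∈ α₀ : a > ρ₁}`,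
is a des-preserving bijection onto `{σ ∈ S_n : (srw σ).length ≥ n - k}`, with inverse
`ν : σ ↦ ({σ₁, …, σ_{n-k-1}}, σ_{n-k} ⋯ σ_n)`. -/
theorem Paper.statement11 (n k : ℕ) (hk : k ≤ n - 1) :
    (∀ ρ : List ℕ, ρ.length = k + 1 → ρ.Nodup → (∀ x ∈ ρ, x ∈ Finset.Icc 1 n) →
      (mu n ρ).Perm (List.range' 1 n) ∧
      n - k ≤ (srw (mu n ρ)).length ∧
      desPairL n ρ = des (mu n ρ) ∧
      (mu n ρ).drop (n - k - 1) = ρ ∧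
      ((mu n ρ).take (n - k - 1)).toFinset = (Finset.Icc 1 n).filter (fun a => a ∉ ρ)) ∧
    (∀ σ : List ℕ, σ.Perm (List.range' 1 n) → n - k ≤ (srw σ).length →
      mu n (σ.drop (n - k - 1)) = σ) := by
  by_cases hn : n = 0
  · subst hn
    constructor
    · intro ρ hlen hnd hmem
      exfalso
      cases ρ with
      | nil => simp at hlen
      | cons r ρ' =>
        have := hmem r (by simp)
        rw [Finset.mem_Icc] at this
        omega
    · intro σ hσ _
      have hσ0 : σ = [] := by simpa using hσ
      rw [hσ0]
      have hIcc : Finset.Icc 1 0 = (∅ : Finset ℕ) := Finset.Icc_eq_empty (by omega)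
      simp [mu, hIcc]
  · have hkn : k + 1 ≤ n := by omega
    exact ⟨fun ρ hl hnd hm => part1 n k hkn ρ hl hnd hm,
      fun σ hσ hle => part2 n k hkn σ hσ hle⟩
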